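/- Let F be a field of characteristic zero, let x_1, x_2, x_3, x_4 be pairwise distinct elements of F, let a_1, a_2, a_3, a_4 ∈ F, and set f(s) = 1 + a_1 s + a_2 s² + a_3 s³ + a_4 s⁴. Then the coefficient of t⁴ in the polynomial Σ_{S ⊆ {1,2,3,4}, |S| = 2} Π_{i ∈ S, j ∉ S} f(t(x_i − x_j)) / (x_i − x_j) ∈ F[t] equals 2(3a_1⁴ + 12a_1²a_2 + 7a_2² + 2a_1a_3 − 10a_4). (This computes the complex cobordism class of the Grassmannian G_{4,2} = U(4)/(U(2)×U(2)) with its invariant complex structure, whose six fixed points are indexed by the 2-element subsets S, with weights x_i − x_j for i ∈ S, j ∉ S.) -/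

import Mathlib

open Polynomial

section Helpers
variable {F : Type*} [CommRing F]

private lemma cm1 (p q : F[X]) : (p*q).coeff 1 =
    p.coeff 0 * q.coeff 1 + p.coeff 1 * q.coeff 0 := by
  rw [coeff_mul, Finset.Nat.sum_antidiagonal_eq_sum_range_succ_mk]
  simp [Finset.sum_range_succ]

private lemma cm2 (p q : F[X]) : (p*q).coeff 2 =
    p.coeff 0 * q.coeff 2 + p.coeff 1 * q.coeff 1 + p.coeff 2 * q.coeff 0 := by
  rw [coeff_mul, Finset.Nat.sum_antidiagonal_eq_sum_range_succ_mk]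
  simp [Finset.sum_range_succ]

private lemma cm3 (p q : F[X]) : (p*q).coeff 3 =
    p.coeff 0 * q.coeff 3 + p.coeff 1 * q.coeff 2 + p.coeff 2 * q.coeff 1 +
      p.coeff 3 * q.coeff 0 := by
  rw [coeff_mul, Finset.Nat.sum_antidiagonal_eq_sum_range_succ_mk]
  simp [Finset.sum_range_succ, add_assoc]

private lemma cm4 (p q : F[X]) : (p*q).coeff 4 =
    p.coeff 0 * q.coeff 4 + p.coeff 1 * q.coeff 3 + p.coeff 2 * q.coeff 2 +
      p.coeff 3 * q.coeff 1 + p.coeff 4 * q.coeff 0 := by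
  rw [coeff_mul, Finset.Nat.sum_antidiagonal_eq_sum_range_succ_mk]
  simp [Finset.sum_range_succ, add_assoc]

private lemma prod4 (a₁ a₂ a₃ a₄ : F) (f : F → F[X])
    (hf : ∀ c : F, f c = 1 + C (a₁ * c) * X + C (a₂ * c ^ 2) * X ^ 2 +
      C (a₃ * c ^ 3) * X ^ 3 + C (a₄ * c ^ 4) * X ^ 4) (c1 c2 c3 c4 : F) :
    ((f c1 * f c2) * (f c3 * f c4)).coeff 4 =
      a₄ * c4^4 + a₁ * c3 * a₃ * c4^3 + a₂ * c3^2 * a₂ * c4^2 + a₃ * c3^3 * a₁ * c4 + a₄ * c3^4 +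
      a₁ * c2 * a₃ * c4^3 + a₁ * c2 * a₁ * c3 * a₂ * c4^2 + a₁ * c2 * a₂ * c3^2 * a₁ * c4 +
      a₁ * c2 * a₃ * c3^3 + a₂ * c2^2 * a₂ * c4^2 + a₂ * c2^2 * a₁ * c3 * a₁ * c4 +
      a₂ * c2^2 * a₂ * c3^2 + a₃ * c2^3 * a₁ * c4 + a₃ * c2^3 * a₁ * c3 + a₄ * c2^4 +
      a₁ * c1 * a₃ * c4^3 + a₁ * c1 * a₁ * c3 * a₂ * c4^2 + a₁ * c1 * a₂ * c3^2 * a₁ * c4 +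
      a₁ * c1 * a₃ * c3^3 + a₁ * c1 * a₁ * c2 * a₂ * c4^2 + a₁ * c1 * a₁ * c2 * a₁ * c3 * a₁ * c4 +
      a₁ * c1 * a₁ * c2 * a₂ * c3^2 + a₁ * c1 * a₂ * c2^2 * a₁ * c4 + a₁ * c1 * a₂ * c2^2 * a₁ * c3 +
      a₁ * c1 * a₃ * c2^3 + a₂ * c1^2 * a₂ * c4^2 + a₂ * c1^2 * a₁ * c3 * a₁ * c4 +
      a₂ * c1^2 * a₂ * c3^2 + a₂ * c1^2 * a₁ * c2 * a₁ * c4 + a₂ * c1^2 * a₁ * c2 * a₁ * c3 +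
      a₂ * c1^2 * a₂ * c2^2 + a₃ * c1^3 * a₁ * c4 + a₃ * c1^3 * a₁ * c3 + a₃ * c1^3 * a₁ * c2 +
      a₄ * c1^4 := by
  have hco : ∀ (c : F) (n : ℕ), (f c).coeff n = (if n = 0 then 1 else 0) + (if 1 = n then a₁ * c else 0)
      + (if n = 2 then a₂ * c ^ 2 else 0) + (if n = 3 then a₃ * c ^ 3 else 0)
      + (if n = 4 then a₄ * c ^ 4 else 0) := by
    intro c n
    simp only [hf, coeff_add, coeff_C_mul, coeff_X_pow, coeff_one, coeff_X, mul_ite, mul_one,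
      mul_zero, pow_one]
  have h0 : ∀ c : F, (f c).coeff 0 = 1 := by intro c; rw [hco]; norm_num
  have h1 : ∀ c : F, (f c).coeff 1 = a₁ * c := by intro c; rw [hco]; norm_num
  have h2 : ∀ c : F, (f c).coeff 2 = a₂ * c ^ 2 := by intro c; rw [hco]; norm_num
  have h3 : ∀ c : F, (f c).coeff 3 = a₃ * c ^ 3 := by intro c; rw [hco]; norm_num
  have h4 : ∀ c : F, (f c).coeff 4 = a₄ * c ^ 4 := by intro c; rw [hco]; norm_num
  simp only [cm4, cm3, cm2, cm1, mul_coeff_zero, h0, h1, h2, h3, h4]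
  ring

end Helpers

private lemma inv_eq_div' {F : Type*} [Field F] {D u v : F} (hD : D ≠ 0) (h : u * v = D) :
    u⁻¹ = v / D := by
  have hu : u ≠ 0 := left_ne_zero_of_mul (h ▸ hD)
  rw [eq_div_iff hD, ← h, inv_mul_cancel_left₀ hu]

theorem cobordism_class_grassmannian_G42 {F : Type*} [Field F] [CharZero F]
    (x : Fin 4 → F) (hx : Function.Injective x) (a₁ a₂ a₃ a₄ : F) (f : F → F[X])
    (hf : ∀ c : F, f c = 1 + C (a₁ * c) * X + C (a₂ * c ^ 2) * X ^ 2 +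
      C (a₃ * c ^ 3) * X ^ 3 + C (a₄ * c ^ 4) * X ^ 4) :
    (∑ S ∈ Finset.powersetCard 2 (Finset.univ : Finset (Fin 4)),
        C ((∏ i ∈ S, ∏ j ∈ Sᶜ, (x i - x j))⁻¹) * ∏ i ∈ S, ∏ j ∈ Sᶜ, f (x i - x j)).coeff 4 =
      2 * (3 * a₁ ^ 4 + 12 * a₁ ^ 2 * a₂ + 7 * a₂ ^ 2 + 2 * a₁ * a₃ - 10 * a₄) := by
  have hS : (Finset.powersetCard 2 (Finset.univ : Finset (Fin 4))) =
      {{0,1},{0,2},{0,3},{1,2},{1,3},{2,3}} := by decide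
  have hc01 : ({0,1} : Finset (Fin 4))ᶜ = {2,3} := by decide
  have hc02 : ({0,2} : Finset (Fin 4))ᶜ = {1,3} := by decide
  have hc03 : ({0,3} : Finset (Fin 4))ᶜ = {1,2} := by decide
  have hc12 : ({1,2} : Finset (Fin 4))ᶜ = {0,3} := by decide
  have hc13 : ({1,3} : Finset (Fin 4))ᶜ = {0,2} := by decide
  have hc23 : ({2,3} : Finset (Fin 4))ᶜ = {0,1} := by decide
  rw [hS, Finset.sum_insert (by decide), Finset.sum_insert (by decide),
    Finset.sum_insert (by decide), Finset.sum_insert (by decide),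
    Finset.sum_insert (by decide), Finset.sum_singleton,
    hc01, hc02, hc03, hc12, hc13, hc23]
  simp only [Finset.prod_pair (show (0:Fin 4) ≠ 1 by decide),
    Finset.prod_pair (show (0:Fin 4) ≠ 2 by decide),
    Finset.prod_pair (show (0:Fin 4) ≠ 3 by decide),
    Finset.prod_pair (show (1:Fin 4) ≠ 2 by decide),
    Finset.prod_pair (show (1:Fin 4) ≠ 3 by decide),
    Finset.prod_pair (show (2:Fin 4) ≠ 3 by decide)]
  simp only [coeff_add, coeff_C_mul, prod4 a₁ a₂ a₃ a₄ f hf]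
  have h01 : x 0 - x 1 ≠ 0 := sub_ne_zero.mpr (hx.ne (by decide))
  have h02 : x 0 - x 2 ≠ 0 := sub_ne_zero.mpr (hx.ne (by decide))
  have h03 : x 0 - x 3 ≠ 0 := sub_ne_zero.mpr (hx.ne (by decide))
  have h12 : x 1 - x 2 ≠ 0 := sub_ne_zero.mpr (hx.ne (by decide))
  have h13 : x 1 - x 3 ≠ 0 := sub_ne_zero.mpr (hx.ne (by decide))
  have h23 : x 2 - x 3 ≠ 0 := sub_ne_zero.mpr (hx.ne (by decide))
  set D : F := (x 0 - x 1) * (x 0 - x 2) * (x 0 - x 3) * (x 1 - x 2) * (x 1 - x 3) * (x 2 - x 3)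
    with hDdef
  have hD : D ≠ 0 :=
    mul_ne_zero (mul_ne_zero (mul_ne_zero (mul_ne_zero (mul_ne_zero h01 h02) h03) h12) h13) h23
  rw [inv_eq_div' hD (show ((x 0 - x 2) * (x 0 - x 3)) * ((x 1 - x 2) * (x 1 - x 3)) *
      ((x 0 - x 1) * (x 2 - x 3)) = D by rw [hDdef]; ring),
    inv_eq_div' hD (show ((x 0 - x 1) * (x 0 - x 3)) * ((x 2 - x 1) * (x 2 - x 3)) *
      (-((x 0 - x 2) * (x 1 - x 3))) = D by rw [hDdef]; ring),
    inv_eq_div' hD (show ((x 0 - x 1) * (x 0 - x 2)) * ((x 3 - x 1) * (x 3 - x 2)) *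
      ((x 0 - x 3) * (x 1 - x 2)) = D by rw [hDdef]; ring),
    inv_eq_div' hD (show ((x 1 - x 0) * (x 1 - x 3)) * ((x 2 - x 0) * (x 2 - x 3)) *
      ((x 0 - x 3) * (x 1 - x 2)) = D by rw [hDdef]; ring),
    inv_eq_div' hD (show ((x 1 - x 0) * (x 1 - x 2)) * ((x 3 - x 0) * (x 3 - x 2)) *
      (-((x 0 - x 2) * (x 1 - x 3))) = D by rw [hDdef]; ring),
    inv_eq_div' hD (show ((x 2 - x 0) * (x 2 - x 1)) * ((x 3 - x 0) * (x 3 - x 1)) *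
      ((x 0 - x 1) * (x 2 - x 3)) = D by rw [hDdef]; ring)]
  simp only [div_mul_eq_mul_div, ← add_div]
  rw [div_eq_iff hD, hDdef]
  ring
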